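/- Let φ : ℝ → ℂ be a Schwartz function, and define B(φ)(x) = ∫_{|t|≤1} (φ(x-t) - φ(x)) dt/(2|t|) + ∫_{|t|>1} φ(x-t) dt/(2|t|) + (log(2π) + γ)·φ(x), where γ is the Euler–Mascheroni constant. Then B(φ) is a continuous function and B(φ)(x) = O(1/|x|) as |x| → ∞. -/

import Mathlib

open Real Complex MeasureTheory Filter Asymptotics

/-- `B(φ)`: minus the additive convolution of `φ` with the Fourier transform of `log|y|`. -/
noncomputable def Bop (φ : SchwartzMap ℝ ℂ) (x : ℝ) : ℂ :=
  (∫ t in {t : ℝ | |t| ≤ 1}, (φ (x - t) - φ x) / ((2 * |t| : ℝ) : ℂ)) +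
  (∫ t in {t : ℝ | 1 < |t|}, φ (x - t) / ((2 * |t| : ℝ) : ℂ)) +
  ((Real.log (2 * Real.pi) + Real.eulerMascheroniConstant : ℝ) : ℂ) * φ x

namespace BopAux

/-- The convolution kernel `1_{|u|>1} (2|u|)⁻¹` (as a complex-valued function). -/
noncomputable def ker : ℝ → ℂ :=
  fun u => Set.indicator {u : ℝ | 1 < |u|} (fun u => (((2 * |u|)⁻¹ : ℝ) : ℂ)) u

lemma measurableSet_S1 : MeasurableSet {t : ℝ | |t| ≤ 1} :=
  (isClosed_le _root_.continuous_abs continuous_const).measurableSet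

lemma measurableSet_S2 : MeasurableSet {t : ℝ | 1 < |t|} :=
  (isOpen_lt continuous_const _root_.continuous_abs).measurableSet

lemma S1_vol : volume {t : ℝ | |t| ≤ 1} = 2 := by
  have h : {t : ℝ | |t| ≤ 1} = Set.Icc (-1) 1 := by
    ext t; simp [abs_le]
  rw [h, Real.volume_Icc]
  norm_num

lemma div_real_cast (z : ℂ) (r : ℝ) : z / (r : ℂ) = z * ((r⁻¹ : ℝ) : ℂ) := by
  rw [div_eq_mul_inv, Complex.ofReal_inv]

lemma le_div_sq {a M r : ℝ} (hr : 0 < r) (h : r ^ 2 * a ≤ M) : a ≤ M / r ^ 2 := by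
  rw [le_div_iff₀ (by positivity)]
  calc a * r ^ 2 = r ^ 2 * a := mul_comm _ _
    _ ≤ M := h

lemma ker_norm_le (u : ℝ) : ‖ker u‖ ≤ 1 / 2 := by
  unfold ker
  by_cases hu : u ∈ {u : ℝ | 1 < |u|}
  · rw [Set.indicator_of_mem hu]
    have h1 : (1 : ℝ) < |u| := hu
    rw [Complex.norm_real, Real.norm_eq_abs, _root_.abs_of_nonneg (by positivity)]
    rw [show (1 : ℝ) / 2 = 2⁻¹ by norm_num]
    apply inv_anti₀ two_pos
    linarith
  · rw [Set.indicator_of_notMem hu]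
    norm_num

lemma meas_inv_fun : Measurable fun t : ℝ => (((2 * |t|)⁻¹ : ℝ) : ℂ) :=
  Complex.measurable_ofReal.comp ((_root_.continuous_abs.measurable.const_mul 2).inv)

lemma ker_measurable : Measurable ker :=
  meas_inv_fun.indicator measurableSet_S2

lemma ker_continuousAt {u : ℝ} (hu : |u| ≠ 1) : ContinuousAt ker u := by
  rcases lt_or_gt_of_ne hu with h | h
  · have hopen : IsOpen {v : ℝ | |v| < 1} := isOpen_lt _root_.continuous_abs continuous_const
    have hev : ker =ᶠ[nhds u] fun _ => (0 : ℂ) := by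
      filter_upwards [hopen.mem_nhds h] with v hv
      have hnm : v ∉ {u : ℝ | 1 < |u|} := by
        simp only [Set.mem_setOf_eq, not_lt]
        exact le_of_lt hv
      simp only [ker, Set.indicator_of_notMem hnm]
    exact continuousAt_const.congr hev.symm
  · have hopen : IsOpen {v : ℝ | 1 < |v|} := isOpen_lt continuous_const _root_.continuous_abs
    have hev : ker =ᶠ[nhds u] fun v => (((2 * |v|)⁻¹ : ℝ) : ℂ) := by
      filter_upwards [hopen.mem_nhds h] with v hv
      have hm : v ∈ {u : ℝ | 1 < |u|} := hv
      simp only [ker, Set.indicator_of_mem hm]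
    have hc : ContinuousAt (fun v : ℝ => (((2 * |v|)⁻¹ : ℝ) : ℂ)) u := by
      apply Complex.continuous_ofReal.continuousAt.comp
      exact ((continuous_const.mul _root_.continuous_abs).continuousAt).inv₀ (mul_pos two_pos (by linarith)).ne'
    exact hc.congr hev.symm

/-- Representation of `Bop` with multiplications instead of divisions, and the second
integral as a convolution. -/
lemma Bop_eq (φ : SchwartzMap ℝ ℂ) (x : ℝ) : Bop φ x =
    (∫ t in {t : ℝ | |t| ≤ 1}, (φ (x - t) - φ x) * (((2 * |t|)⁻¹ : ℝ) : ℂ)) +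
    (∫ s, φ s * ker (x - s)) +
    ((Real.log (2 * Real.pi) + Real.eulerMascheroniConstant : ℝ) : ℂ) * φ x := by
  simp only [Bop]
  congr 1
  congr 1
  · simp only [div_real_cast]
  · rw [← integral_indicator measurableSet_S2]
    have hfun : (fun t => Set.indicator {t : ℝ | 1 < |t|}
        (fun t => φ (x - t) / ((2 * |t| : ℝ) : ℂ)) t)
        = fun t => (fun s => φ s * ker (x - s)) (x - t) := by
      funext t
      have hxt : x - (x - t) = t := by ring
      simp only [hxt]
      unfold ker
      by_cases ht : t ∈ {t : ℝ | 1 < |t|}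
      · rw [Set.indicator_of_mem ht, Set.indicator_of_mem ht, div_real_cast]
      · rw [Set.indicator_of_notMem ht, Set.indicator_of_notMem ht, mul_zero]
    rw [hfun, integral_sub_left_eq_self (fun s => φ s * ker (x - s)) volume x]

lemma Bop_continuous (φ : SchwartzMap ℝ ℂ) : Continuous (Bop φ) := by
  have hrep : Bop φ = fun x =>
      (∫ t in {t : ℝ | |t| ≤ 1}, (φ (x - t) - φ x) * (((2 * |t|)⁻¹ : ℝ) : ℂ)) +
      (∫ s, φ s * ker (x - s)) +
      ((Real.log (2 * Real.pi) + Real.eulerMascheroniConstant : ℝ) : ℂ) * φ x :=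
    funext (Bop_eq φ)
  rw [hrep]
  -- derivative bound for the Lipschitz estimate
  obtain ⟨Cd, hCdpos, hCd⟩ := (SchwartzMap.derivCLM ℝ ℂ φ).decay 0 0
  simp only [norm_iteratedFDeriv_zero, SchwartzMap.derivCLM_apply, pow_zero, one_mul] at hCd
  have hLip : ∀ a b : ℝ, ‖φ b - φ a‖ ≤ Cd * ‖b - a‖ := fun a b =>
    Convex.norm_image_sub_le_of_norm_deriv_le
      (fun y _ => φ.differentiable.differentiableAt)
      (fun y _ => hCd y) convex_univ (Set.mem_univ a) (Set.mem_univ b)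
  have h1 : Continuous fun x =>
      ∫ t in {t : ℝ | |t| ≤ 1}, (φ (x - t) - φ x) * (((2 * |t|)⁻¹ : ℝ) : ℂ) := by
    apply continuous_of_dominated (bound := fun _ => Cd / 2)
    · intro x
      exact (((φ.continuous.comp (continuous_const.sub continuous_id)).sub
        continuous_const).measurable.mul meas_inv_fun).aestronglyMeasurable
    · intro x
      refine ae_of_all _ fun t => ?_
      rw [norm_mul, Complex.norm_real, Real.norm_eq_abs, _root_.abs_of_nonneg (by positivity)]
      rcases eq_or_ne t 0 with rfl | ht
      · simp only [_root_.abs_zero, mul_zero, inv_zero]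
        positivity
      · have habs : (0 : ℝ) < |t| := _root_.abs_pos.2 ht
        have hb : ‖φ (x - t) - φ x‖ ≤ Cd * |t| := by
          have := hLip x (x - t)
          simpa [sub_sub_cancel_left, Real.norm_eq_abs, _root_.abs_neg] using this
        calc ‖φ (x - t) - φ x‖ * (2 * |t|)⁻¹ ≤ (Cd * |t|) * (2 * |t|)⁻¹ := by
              exact mul_le_mul_of_nonneg_right hb (by positivity)
          _ = Cd / 2 := by field_simp
    · refine ((integrableOn_const_iff (by finiteness)).2 (Or.inr ?_))
      rw [S1_vol]; norm_num
    · refine ae_of_all _ fun t => ?_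
      exact ((φ.continuous.comp (continuous_id.sub continuous_const)).sub
        φ.continuous).mul continuous_const
  have h2 : Continuous fun x => ∫ s, φ s * ker (x - s) := by
    rw [continuous_iff_continuousAt]
    intro x₀
    apply continuousAt_of_dominated (bound := fun s => ‖φ s‖ * (1 / 2))
    · refine Filter.Eventually.of_forall fun x => ?_
      exact (φ.continuous.measurable.mul
        (ker_measurable.comp (measurable_const.sub measurable_id))).aestronglyMeasurable
    · refine Filter.Eventually.of_forall fun x => ae_of_all _ fun s => ?_
      rw [norm_mul]
      exact mul_le_mul_of_nonneg_left (ker_norm_le _) (norm_nonneg _)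
    · exact (φ.integrable.norm).mul_const _
    · have hsub : {s : ℝ | |x₀ - s| = 1} ⊆ ({x₀ - 1, x₀ + 1} : Set ℝ) := by
        intro s hs
        rcases (_root_.abs_eq (by norm_num : (0:ℝ) ≤ 1)).1 hs with h | h
        · left; linarith
        · right; simp only [Set.mem_singleton_iff]; linarith
      have h0 : volume {s : ℝ | |x₀ - s| = 1} = 0 :=
        measure_mono_null hsub (((Set.finite_singleton _).insert _).measure_zero _)
      have hnull : ∀ᵐ s : ℝ, s ∉ {s : ℝ | |x₀ - s| = 1} := measure_eq_zero_iff_ae_notMem.1 h0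
      filter_upwards [hnull] with s hs
      have hks : ContinuousAt ker (x₀ - s) := ker_continuousAt hs
      have hsub : ContinuousAt (fun x : ℝ => x - s) x₀ :=
        (continuous_id.sub continuous_const).continuousAt
      exact continuousAt_const.mul (ContinuousAt.comp hks hsub)
  exact (h1.add h2).add (continuous_const.mul φ.continuous)

lemma Bop_decay (φ : SchwartzMap ℝ ℂ) :
    (Bop φ) =O[Filter.cocompact ℝ] (fun x : ℝ => 1 / |x|) := by
  obtain ⟨C0, hC0pos, hC0⟩ := φ.decay 1 0
  obtain ⟨C2, hC2pos, hC2⟩ := φ.decay 2 0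
  obtain ⟨C3, hC3pos, hC3⟩ := (SchwartzMap.derivCLM ℝ ℂ φ).decay 2 0
  simp only [norm_iteratedFDeriv_zero, SchwartzMap.derivCLM_apply, Real.norm_eq_abs,
    pow_one] at hC0 hC2 hC3
  set I := ∫ s : ℝ, ‖φ s‖ with hIdef
  have hInonneg : 0 ≤ I := integral_nonneg fun s => norm_nonneg _
  set c : ℂ := ((Real.log (2 * Real.pi) + Real.eulerMascheroniConstant : ℝ) : ℂ) with hcdef
  set C : ℝ := 2 * C3 + (2 * C2 + I) + ‖c‖ * C0 with hCdef
  have key : ∀ x : ℝ, 2 ≤ |x| → ‖Bop φ x‖ ≤ C * ‖(1 : ℝ) / |x|‖ := by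
    intro x hx
    have hx0 : (0 : ℝ) < |x| := by linarith
    have hxx : x ^ 2 = |x| ^ 2 := (_root_.sq_abs x).symm
    have hx2 : (0 : ℝ) < x ^ 2 := by rw [hxx]; positivity
    -- Term 1
    have hT1 : ‖∫ t in {t : ℝ | |t| ≤ 1}, (φ (x - t) - φ x) / ((2 * |t| : ℝ) : ℂ)‖
        ≤ (2 * C3 / x ^ 2) * 2 := by
      have hmeas : AEStronglyMeasurable
          (fun t => (φ (x - t) - φ x) / ((2 * |t| : ℝ) : ℂ))
          (volume.restrict {t : ℝ | |t| ≤ 1}) := by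
        simp only [div_real_cast]
        exact (((φ.continuous.comp (continuous_const.sub continuous_id)).sub
          continuous_const).measurable.mul meas_inv_fun).aestronglyMeasurable.restrict
      have hptb : ∀ t ∈ {t : ℝ | |t| ≤ 1},
          ‖(φ (x - t) - φ x) / ((2 * |t| : ℝ) : ℂ)‖ ≤ 2 * C3 / x ^ 2 := by
        intro t ht
        have ht1 : |t| ≤ 1 := ht
        have hderiv : ∀ y ∈ Metric.closedBall x 1, ‖deriv (⇑φ) y‖ ≤ 4 * C3 / x ^ 2 := by
          intro y hy
          have hdist : |y - x| ≤ 1 := by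
            rw [← Real.dist_eq]; exact Metric.mem_closedBall.1 hy
          have hyx : |x| - 1 ≤ |y| := by
            have h := abs_sub_abs_le_abs_sub x y
            have : |x - y| ≤ 1 := by rwa [abs_sub_comm]
            linarith
          have hy2 : |x| / 2 ≤ |y| := by linarith
          have hy0 : (0 : ℝ) < |y| := by linarith
          calc ‖deriv (⇑φ) y‖ ≤ C3 / |y| ^ 2 := le_div_sq hy0 (hC3 y)
            _ ≤ C3 / (|x| / 2) ^ 2 := by gcongr
            _ = 4 * C3 / x ^ 2 := by
                rw [hxx, div_pow, div_div_eq_mul_div]; ring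
        have hmvt : ‖φ (x - t) - φ x‖ ≤ (4 * C3 / x ^ 2) * |t| := by
          have hxmem : x ∈ Metric.closedBall x 1 := Metric.mem_closedBall_self (by norm_num)
          have hxtmem : x - t ∈ Metric.closedBall x 1 := by
            rw [Metric.mem_closedBall, Real.dist_eq]
            simpa [sub_sub_cancel_left, _root_.abs_neg] using ht1
          have := Convex.norm_image_sub_le_of_norm_deriv_le
            (fun y _ => φ.differentiable.differentiableAt) hderiv
            (convex_closedBall x 1) hxmem hxtmem
          simpa [sub_sub_cancel_left, Real.norm_eq_abs, _root_.abs_neg] using this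
        rw [norm_div, Complex.norm_real, Real.norm_eq_abs, _root_.abs_of_nonneg (by positivity)]
        rcases eq_or_ne t 0 with rfl | ht0
        · simp only [_root_.abs_zero, mul_zero, div_zero]
          positivity
        · have habs : (0 : ℝ) < |t| := _root_.abs_pos.2 ht0
          calc ‖φ (x - t) - φ x‖ / (2 * |t|) ≤ ((4 * C3 / x ^ 2) * |t|) / (2 * |t|) := by
                gcongr
            _ = 2 * C3 / x ^ 2 := by
                rw [mul_comm (2 : ℝ) |t|, ← div_div, mul_div_assoc, div_self habs.ne',
                  mul_one, div_div]
                ring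
      have hb := norm_setIntegral_le_of_norm_le_const (μ := volume)
        (by rw [S1_vol]; simp) hptb
      rw [measureReal_def, S1_vol] at hb
      simpa using hb
    -- Term 2
    have hT2 : ‖∫ t in {t : ℝ | 1 < |t|}, φ (x - t) / ((2 * |t| : ℝ) : ℂ)‖
        ≤ 2 * C2 / |x| + I / |x| := by
      set h : ℝ → ℝ := fun t =>
        (Set.Icc (-(|x| / 2)) (|x| / 2)).indicator (fun _ => 2 * C2 / x ^ 2) t
          + ‖φ (x - t)‖ * |x|⁻¹ with hhdef
      have hmeasIcc : MeasurableSet (Set.Icc (-(|x| / 2)) (|x| / 2)) := measurableSet_Icc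
      have hint1 : Integrable
          ((Set.Icc (-(|x| / 2)) (|x| / 2)).indicator (fun _ => 2 * C2 / x ^ 2)) volume :=
        ((integrableOn_const_iff (by finiteness)).2 (Or.inr (by rw [Real.volume_Icc]; exact ENNReal.ofReal_lt_top))
          ).integrable_indicator hmeasIcc
      have hint2 : Integrable (fun t => ‖φ (x - t)‖ * |x|⁻¹) volume :=
        ((φ.integrable.comp_sub_left x).norm).mul_const _
      have hinth : Integrable h volume := hint1.add hint2
      have hnn : 0 ≤ᶠ[ae volume] h := ae_of_all _ fun t =>
        add_nonneg (Set.indicator_nonneg (fun _ _ => by positivity) t) (by positivity)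
      have hbound : ∀ᵐ t ∂(volume.restrict {t : ℝ | 1 < |t|}),
          ‖φ (x - t) / ((2 * |t| : ℝ) : ℂ)‖ ≤ h t := by
        rw [ae_restrict_iff' measurableSet_S2]
        refine ae_of_all _ fun t ht => ?_
        have ht1 : 1 < |t| := ht
        have ht0 : (0 : ℝ) < |t| := by linarith
        rw [norm_div, Complex.norm_real, Real.norm_eq_abs, _root_.abs_of_nonneg (by positivity)]
        rcases le_or_gt |t| (|x| / 2) with hcase | hcase
        · have hmem : t ∈ Set.Icc (-(|x| / 2)) (|x| / 2) := by
            rw [Set.mem_Icc]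
            constructor
            · linarith [neg_abs_le t]
            · linarith [le_abs_self t]
          have hxt : |x| / 2 ≤ |x - t| := by
            have := abs_sub_abs_le_abs_sub x t
            linarith
          have hxt0 : (0 : ℝ) < |x - t| := by linarith
          have hphi : ‖φ (x - t)‖ ≤ 4 * C2 / x ^ 2 := by
            calc ‖φ (x - t)‖ ≤ C2 / |x - t| ^ 2 := le_div_sq hxt0 (hC2 _)
              _ ≤ C2 / (|x| / 2) ^ 2 := by gcongr
              _ = 4 * C2 / x ^ 2 := by
                  rw [hxx, div_pow, div_div_eq_mul_div]; ring
          have hker : (2 * |t|)⁻¹ ≤ 2⁻¹ := inv_anti₀ two_pos (by linarith)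
          have hnn2 : (0 : ℝ) ≤ ‖φ (x - t)‖ * |x|⁻¹ := by positivity
          calc ‖φ (x - t)‖ / (2 * |t|) = ‖φ (x - t)‖ * (2 * |t|)⁻¹ := div_eq_mul_inv _ _
            _ ≤ (4 * C2 / x ^ 2) * 2⁻¹ :=
              mul_le_mul hphi hker (by positivity) (by positivity)
            _ = 2 * C2 / x ^ 2 := by ring
            _ ≤ h t := by
              simp only [hhdef, Set.indicator_of_mem hmem]
              linarith
        · have hker : (2 * |t|)⁻¹ ≤ |x|⁻¹ := inv_anti₀ hx0 (by linarith)
          have hnn1 : (0 : ℝ) ≤ (Set.Icc (-(|x| / 2)) (|x| / 2)).indicator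
              (fun _ => 2 * C2 / x ^ 2) t :=
            Set.indicator_nonneg (fun _ _ => by positivity) t
          calc ‖φ (x - t)‖ / (2 * |t|) = ‖φ (x - t)‖ * (2 * |t|)⁻¹ := div_eq_mul_inv _ _
            _ ≤ ‖φ (x - t)‖ * |x|⁻¹ := mul_le_mul_of_nonneg_left hker (norm_nonneg _)
            _ ≤ h t := by simp only [hhdef]; linarith
      calc ‖∫ t in {t : ℝ | 1 < |t|}, φ (x - t) / ((2 * |t| : ℝ) : ℂ)‖
          ≤ ∫ t in {t : ℝ | 1 < |t|}, h t := norm_integral_le_of_norm_le hinth.restrict hbound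
        _ ≤ ∫ t, h t := setIntegral_le_integral hinth hnn
        _ = (volume (Set.Icc (-(|x| / 2)) (|x| / 2))).toReal • (2 * C2 / x ^ 2)
            + (∫ t, ‖φ (x - t)‖) * |x|⁻¹ := by
            rw [hhdef, integral_add hint1 hint2, integral_indicator_const _ hmeasIcc,
              integral_mul_const]
            rfl
        _ = 2 * C2 / |x| + I / |x| := by
            rw [integral_sub_left_eq_self (fun u => ‖φ u‖) volume x, Real.volume_Icc]
            rw [show |x| / 2 - (-(|x| / 2)) = |x| by ring, ENNReal.toReal_ofReal hx0.le,
              smul_eq_mul, hxx]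
            rw [div_eq_mul_inv I]
            congr 1
            field_simp
    -- Term 3
    have hT3 : ‖c * φ x‖ ≤ ‖c‖ * C0 / |x| := by
      rw [norm_mul]
      have hφx : ‖φ x‖ ≤ C0 / |x| := by
        rw [le_div_iff₀ hx0]
        have := hC0 x
        linarith [mul_comm |x| ‖φ x‖]
      calc ‖c‖ * ‖φ x‖ ≤ ‖c‖ * (C0 / |x|) :=
          mul_le_mul_of_nonneg_left hφx (norm_nonneg _)
        _ = ‖c‖ * C0 / |x| := by ring
    have hsplit : ‖Bop φ x‖ ≤
        ‖∫ t in {t : ℝ | |t| ≤ 1}, (φ (x - t) - φ x) / ((2 * |t| : ℝ) : ℂ)‖ +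
        ‖∫ t in {t : ℝ | 1 < |t|}, φ (x - t) / ((2 * |t| : ℝ) : ℂ)‖ +
        ‖c * φ x‖ := by
      simp only [Bop, hcdef]
      exact norm_add₃_le
    have h1' : (2 * C3 / x ^ 2) * 2 ≤ 2 * C3 / |x| := by
      rw [hxx, div_mul_eq_mul_div, div_le_div_iff₀ (by positivity) hx0]
      have h2x : 2 * |x| ≤ |x| ^ 2 := by nlinarith
      nlinarith [mul_le_mul_of_nonneg_left h2x (by positivity : (0:ℝ) ≤ 2 * C3)]
    have hnorm1 : ‖(1 : ℝ) / |x|‖ = 1 / |x| := by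
      rw [Real.norm_eq_abs, _root_.abs_of_nonneg (by positivity)]
    rw [hnorm1]
    have hCval : C * (1 / |x|) =
        2 * C3 / |x| + (2 * C2 / |x| + I / |x|) + ‖c‖ * C0 / |x| := by
      rw [hCdef]; field_simp; try ring
    rw [hCval]
    have := hsplit.trans (add_le_add (add_le_add (hT1.trans h1') hT2) hT3)
    linarith
  apply IsBigO.of_bound C
  rw [cocompact_eq_atBot_atTop, eventually_sup]
  constructor
  · filter_upwards [eventually_le_atBot (-2 : ℝ)] with x hx
    exact key x (by rw [_root_.abs_of_nonpos (by linarith)]; linarith)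
  · filter_upwards [eventually_ge_atTop (2 : ℝ)] with x hx
    exact key x (by rw [_root_.abs_of_nonneg (by linarith)]; linarith)

end BopAux

theorem Bop_continuous_and_decay (φ : SchwartzMap ℝ ℂ) :
    Continuous (Bop φ) ∧
      (Bop φ) =O[Filter.cocompact ℝ] (fun x : ℝ => 1 / |x|) := by
  exact ⟨BopAux.Bop_continuous φ, BopAux.Bop_decay φ⟩
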